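/- arXiv:1611.06638 — 2 statements merged into one kernel-verified Lean document; each statement's English description precedes it below -/
import Mathlib

section
/- Let A be a real m×n matrix and B be a real m×p matrix whose column spaces are orthogonal, i.e., AᵀB = 0 (equivalently, every column of A is orthogonal to every column of B). Then the nuclear norm of the column-wise concatenation [A,B] equals the sum of the nuclear norms: ‖[A,B]‖_* = ‖A‖_* + ‖B‖_*. -/
open Matrix Polynomial

section Aux

variable {k : Type*} [Fintype k] [DecidableEq k]

lemma charpoly_conj_aux {R : Type*} [CommRing R] (U V D : Matrix k k R)
    (hUV : U * V = 1) (hVU : V * U = 1) : (U * D * V).charpoly = D.charpoly := by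
  have hmat : charmatrix (U * D * V) =
      U.map C * charmatrix D * V.map C := by
    unfold charmatrix
    have hmap : ∀ (X Y : Matrix k k R), (X * Y).map (C : R →+* R[X]) =
        X.map C * Y.map C := fun X Y => Matrix.map_mul
    have hscalar : Matrix.scalar k (X : R[X]) = (X : R[X]) • (1 : Matrix k k R[X]) := by
      rw [smul_one_eq_diagonal]; rfl
    rw [mul_sub, sub_mul]
    congr 1
    · rw [hscalar, mul_smul_comm, mul_one, smul_mul_assoc, ← hmap, hUV]
      simp
    · simp only [RingHom.mapMatrix_apply]
      rw [← hmap, ← hmap]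
  unfold Matrix.charpoly
  rw [hmat, det_mul, det_mul]
  have : det (U.map (C : R →+* R[X])) * det (V.map C) = 1 := by
    rw [← det_mul, ← Matrix.map_mul, hUV]
    simp
  ring_nf
  calc det (U.map (C : R →+* R[X])) * det (charmatrix D) * det (V.map C)
      = det (charmatrix D) * (det (U.map (C : R →+* R[X])) * det (V.map C)) := by ring
    _ = det (charmatrix D) := by rw [this, mul_one]

lemma charpoly_diagonal {R : Type*} [CommRing R] (d : k → R) :
    (Matrix.diagonal d).charpoly = ∏ i, (X - C (d i)) := by
  have : charmatrix (Matrix.diagonal d) = Matrix.diagonal fun i => X - C (d i) := by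
    refine Matrix.ext fun i j => ?_
    by_cases hij : i = j
    · subst hij; simp [charmatrix_apply_eq]
    · rw [charmatrix_apply_ne _ _ _ hij, Matrix.diagonal_apply_ne _ hij,
        Matrix.diagonal_apply_ne _ hij]
      simp
  rw [Matrix.charpoly, this, det_diagonal]

lemma charpoly_isHermitian_eq {N : Matrix k k ℝ} (hN : N.IsHermitian) :
    N.charpoly = ∏ i, (X - C (hN.eigenvalues i)) := by
  conv_lhs => rw [hN.spectral_theorem]
  have hd : Matrix.diagonal ((RCLike.ofReal : ℝ → ℝ) ∘ hN.eigenvalues) =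
      Matrix.diagonal hN.eigenvalues := by
    congr 1
  rw [hd, Unitary.conjStarAlgAut_apply, charpoly_conj_aux _ _ _
      (Matrix.mem_unitaryGroup_iff.mp (hN.eigenvectorUnitary).2)
      (Matrix.mem_unitaryGroup_iff'.mp (hN.eigenvectorUnitary).2),
    _root_.charpoly_diagonal]

lemma sum_sqrt_eigenvalues_eq {N : Matrix k k ℝ} (hN : N.IsHermitian) :
    ∑ i, Real.sqrt (hN.eigenvalues i) = (N.charpoly.roots.map Real.sqrt).sum := by
  have : N.charpoly.roots = Finset.univ.val.map hN.eigenvalues := by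
    rw [charpoly_isHermitian_eq hN]
    rw [← Polynomial.roots_multiset_prod_X_sub_C (Finset.univ.val.map hN.eigenvalues)]
    congr 1
    rw [Multiset.map_map]
    rfl
  rw [this, Multiset.map_map]
  rfl

end Aux

/-- The nuclear norm of a real matrix: the sum of its singular values,
i.e. the square roots of the eigenvalues of `Mᴴ * M`. -/
noncomputable def nuclearNorm {m n : Type*} [Fintype m] [Fintype n] [DecidableEq n]
    (M : Matrix m n ℝ) : ℝ :=
  ∑ i, Real.sqrt ((Matrix.isHermitian_conjTranspose_mul_self M).eigenvalues i)

/-- If the column spaces of `A` and `B` are orthogonal (`Aᵀ * B = 0`), then the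
nuclear norm of the column-wise concatenation `[A, B]` equals the sum of the
nuclear norms of `A` and `B`. -/
theorem nuclearNorm_fromColumns_eq_of_orthogonal {m n p : ℕ}
    (A : Matrix (Fin m) (Fin n) ℝ) (B : Matrix (Fin m) (Fin p) ℝ)
    (h : Aᵀ * B = 0) :
    nuclearNorm (Matrix.fromCols A B) = nuclearNorm A + nuclearNorm B := by
  unfold nuclearNorm
  rw [sum_sqrt_eigenvalues_eq, sum_sqrt_eigenvalues_eq, sum_sqrt_eigenvalues_eq]
  have hM : (Matrix.fromCols A B)ᴴ * Matrix.fromCols A B =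
      Matrix.fromBlocks (Aᴴ * A) 0 0 (Bᴴ * B) := by
    rw [conjTranspose_fromCols_eq_fromRows_conjTranspose, fromRows_mul_fromCols]
    have hAB : Aᴴ * B = 0 := by
      rw [conjTranspose_eq_transpose_of_trivial]; exact h
    have hBA : Bᴴ * A = 0 := by
      have := congrArg Matrix.transpose h
      rw [conjTranspose_eq_transpose_of_trivial]; simpa [Matrix.transpose_mul] using this
    rw [hAB, hBA]
  rw [hM, Matrix.charpoly_fromBlocks_zero₁₂, Polynomial.roots_mul
      (mul_ne_zero (Matrix.charpoly_monic _).ne_zero (Matrix.charpoly_monic _).ne_zero),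
    Multiset.map_add, Multiset.sum_add]
end

section
/- Let Y₁, …, Y_C be real matrices each with d rows, let Y = [Y₁, …, Y_C] denote their column-wise concatenation, and let T be a real d×d matrix such that the column spaces of the transformed blocks are pairwise orthogonal, i.e., (T Y_i)ᵀ (T Y_j) = 0 for all i ≠ j. Then the objective value ∑_{c=1}^{C} ‖T Y_c‖_* − ‖T Y‖_* equals zero. -/
open Matrix
open Polynomial

lemma my_charpoly_diagonal {R : Type*} [CommRing R] {m : Type*} [Fintype m] [DecidableEq m]
    (v : m → R) :
    (Matrix.diagonal v).charpoly = ∏ i, (X - C (v i)) := by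
  have hcm : charmatrix (Matrix.diagonal v) = Matrix.diagonal fun i => X - C (v i) := by
    ext i j
    by_cases hij : i = j
    · subst hij; simp [charmatrix_apply_eq]
    · simp [charmatrix_apply_ne _ _ _ hij, Matrix.diagonal_apply_ne _ hij]
  rw [Matrix.charpoly, hcm, Matrix.det_diagonal]

lemma my_charpoly_hermitian {m : Type*} [Fintype m] [DecidableEq m]
    {A : Matrix m m ℝ} (hA : A.IsHermitian) :
    A.charpoly = ∏ i, (X - C (hA.eigenvalues i)) := by
  have hspec := hA.spectral_theorem
  set U : Matrix m m ℝ := (IsHermitian.eigenvectorUnitary hA : Matrix m m ℝ) with hUdef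
  have hU1 : U * star U = 1 :=
    (Matrix.mem_unitaryGroup_iff).mp (IsHermitian.eigenvectorUnitary hA).2
  have hD : Matrix.diagonal (RCLike.ofReal ∘ hA.eigenvalues) = Matrix.diagonal hA.eigenvalues := by
    simp [Function.comp]
  rw [hD] at hspec
  set D : Matrix m m ℝ := Matrix.diagonal hA.eigenvalues with hDdef
  set U' : Matrix m m ℝ[X] := U.map C
  set V' : Matrix m m ℝ[X] := (star U).map C
  have hUV : U' * V' = 1 := by
    rw [← Matrix.map_mul, hU1]
    ext i j; by_cases hij : i = j <;> simp [hij, Matrix.one_apply]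
  have hcm : charmatrix A = U' * charmatrix D * V' := by
    have h1 : charmatrix A = Matrix.diagonal (fun _ => (X : ℝ[X])) - A.map C := by
      ext i j; rw [charmatrix_apply]; simp [Matrix.sub_apply, Matrix.map_apply]
    have h2 : charmatrix D = Matrix.diagonal (fun _ => (X : ℝ[X])) - D.map C := by
      ext i j; rw [charmatrix_apply]; simp [Matrix.sub_apply, Matrix.map_apply]
    have hscal : ∀ M : Matrix m m ℝ[X],
        M * Matrix.diagonal (fun _ => (X : ℝ[X])) = Matrix.diagonal (fun _ => (X : ℝ[X])) * M := by
      intro M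
      ext i j
      simp [Matrix.mul_apply, Matrix.diagonal_apply, Finset.sum_ite_eq, Finset.sum_ite_eq',
        mul_comm]
    rw [h1, h2, Matrix.mul_sub, Matrix.sub_mul]
    congr 1
    · rw [hscal U', Matrix.mul_assoc, hUV, Matrix.mul_one]
    · rw [← Matrix.map_mul, ← Matrix.map_mul, hspec, Unitary.conjStarAlgAut_apply]
  rw [Matrix.charpoly, hcm, Matrix.det_mul, Matrix.det_mul]
  calc U'.det * (charmatrix D).det * V'.det
      = U'.det * V'.det * (charmatrix D).det := by ring
    _ = (U' * V').det * (charmatrix D).det := by rw [Matrix.det_mul]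
    _ = (charmatrix D).det := by rw [hUV, Matrix.det_one, one_mul]
    _ = ∏ i, (X - C (hA.eigenvalues i)) := my_charpoly_diagonal hA.eigenvalues

lemma my_charpoly_sigma_block {R : Type*} [CommRing R] :
    ∀ {C : ℕ} {n : Fin C → ℕ}
      (A : Matrix ((c : Fin C) × Fin (n c)) ((c : Fin C) × Fin (n c)) R),
      (∀ p q : (c : Fin C) × Fin (n c), p.1 ≠ q.1 → A p q = 0) →
      A.charpoly = ∏ c, (A.submatrix (Sigma.mk c) (Sigma.mk c)).charpoly := by
  intro C
  induction C with
  | zero =>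
    intro n A _
    have : IsEmpty ((c : Fin 0) × Fin (n c)) := by
      constructor; rintro ⟨c, _⟩; exact c.elim0
    simp [Matrix.charpoly, Matrix.det_isEmpty]
  | succ C ih =>
    intro n A hA
    let e : ((c : Fin (C+1)) × Fin (n c)) ≃ (Fin (n 0) ⊕ ((c : Fin C) × Fin (n c.succ))) :=
      { toFun := fun x => Fin.cases (motive := fun c => Fin (n c) →
          (Fin (n 0) ⊕ ((c : Fin C) × Fin (n c.succ))))
          Sum.inl (fun c' p => Sum.inr ⟨c', p⟩) x.1 x.2
        invFun := Sum.elim (fun p => ⟨0, p⟩) (fun x => ⟨x.1.succ, x.2⟩)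
        left_inv := by
          rintro ⟨c, p⟩
          induction c using Fin.cases with
          | zero => simp
          | succ c => simp
        right_inv := by
          rintro (p | ⟨c, p⟩) <;> simp }
    have he0 : ∀ p : Fin (n 0), e.symm (Sum.inl p) = ⟨0, p⟩ := fun _ => rfl
    have hes : ∀ x : (c : Fin C) × Fin (n c.succ), e.symm (Sum.inr x) = ⟨x.1.succ, x.2⟩ :=
      fun _ => rfl
    have hre : Matrix.reindex e e A =
        Matrix.fromBlocks (A.submatrix (Sigma.mk 0) (Sigma.mk 0)) 0 0
          (A.submatrix (fun x : (c : Fin C) × Fin (n c.succ) => (⟨x.1.succ, x.2⟩ : (c : Fin (C+1)) × Fin (n c)))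
            (fun x : (c : Fin C) × Fin (n c.succ) => ⟨x.1.succ, x.2⟩)) := by
      ext i j
      rcases i with p | x <;> rcases j with q | y
      · rfl
      · exact hA _ _ (by simp [he0, hes, Fin.succ_ne_zero, (Fin.succ_ne_zero y.1).symm])
      · exact hA _ _ (by simp [he0, hes, Fin.succ_ne_zero])
      · rfl
    set A' : Matrix ((c : Fin C) × Fin (n c.succ)) ((c : Fin C) × Fin (n c.succ)) R :=
      A.submatrix (fun x : (c : Fin C) × Fin (n c.succ) => (⟨x.1.succ, x.2⟩ : (c : Fin (C+1)) × Fin (n c)))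
        (fun x : (c : Fin C) × Fin (n c.succ) => ⟨x.1.succ, x.2⟩) with hA'def
    have hA' : ∀ p q : (c : Fin C) × Fin (n c.succ), p.1 ≠ q.1 → A' p q = 0 := by
      intro p q hpq
      exact hA _ _ (fun hcon => hpq (Fin.succ_injective _ hcon))
    have := Matrix.charpoly_reindex e A
    rw [← this, hre, Matrix.charpoly_fromBlocks_zero₁₂, ih A' hA', Fin.prod_univ_succ]
    rfl

lemma my_sum_eq_of_prod_X_sub_C {ι κ : Type*} [Fintype ι] [Fintype κ]
    (f : ι → ℝ) (g : κ → ℝ) (F : ℝ → ℝ)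
    (h : ∏ i, (X - C (f i)) = ∏ j, (X - C (g j))) :
    ∑ i, F (f i) = ∑ j, F (g j) := by
  have hm : Finset.univ.val.map f = Finset.univ.val.map g := by
    have h1 : ((Finset.univ.val.map f).map fun a => X - C a).prod =
        ((Finset.univ.val.map g).map fun a => X - C a).prod := by
      rw [Multiset.map_map, Multiset.map_map]
      exact h
    have := congrArg Polynomial.roots h1
    rwa [roots_multiset_prod_X_sub_C, roots_multiset_prod_X_sub_C] at this
  calc ∑ i, F (f i) = ((Finset.univ.val.map f).map F).sum := by
        rw [Multiset.map_map]; rfl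
    _ = ((Finset.univ.val.map g).map F).sum := by rw [hm]
    _ = ∑ j, F (g j) := by rw [Multiset.map_map]; rfl

/-- Column-wise concatenation of a family of matrices `Y c : Matrix (Fin d) (Fin (n c)) ℝ`,
indexed by the sigma type of the column indices. -/
def concatColumns {d C : ℕ} {n : Fin C → ℕ}
    (Y : ∀ c, Matrix (Fin d) (Fin (n c)) ℝ) :
    Matrix (Fin d) ((c : Fin C) × Fin (n c)) ℝ :=
  Matrix.of fun i p => Y p.1 i p.2

/-- If the column spaces of the transformed blocks are pairwise orthogonal,
i.e. `(T Y_i)ᵀ (T Y_j) = 0` for `i ≠ j`, then the low-rank transform objective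
`∑ c ‖T Y_c‖_* − ‖T Y‖_*` equals zero, where `Y = [Y₁, …, Y_C]`. -/
theorem lowRankObjective_eq_zero_of_orthogonal {d C : ℕ} {n : Fin C → ℕ}
    (Y : ∀ c, Matrix (Fin d) (Fin (n c)) ℝ) (T : Matrix (Fin d) (Fin d) ℝ)
    (h : ∀ i j, i ≠ j → (T * Y i)ᵀ * (T * Y j) = 0) :
    (∑ c, nuclearNorm (T * Y c)) - nuclearNorm (T * concatColumns Y) = 0 := by
  rw [sub_eq_zero]
  set M := T * concatColumns Y with hMdef
  have hM : ∀ (i : Fin d) (σ : (c : Fin C) × Fin (n c)), M i σ = (T * Y σ.1) i σ.2 := by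
    intro i σ
    simp [hMdef, Matrix.mul_apply, concatColumns]
  have hEntry : ∀ σ τ : (c : Fin C) × Fin (n c),
      (Mᴴ * M) σ τ = ((T * Y σ.1)ᵀ * (T * Y τ.1)) σ.2 τ.2 := by
    intro σ τ
    simp [Matrix.mul_apply, Matrix.conjTranspose_apply, Matrix.transpose_apply, hM, mul_comm]
  have hA : ∀ p q : (c : Fin C) × Fin (n c), p.1 ≠ q.1 → (Mᴴ * M) p q = 0 := by
    intro p q hpq
    rw [hEntry, h p.1 q.1 hpq]
    rfl
  have hsub : ∀ c, (Mᴴ * M).submatrix (Sigma.mk c) (Sigma.mk c) = (T * Y c)ᴴ * (T * Y c) := by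
    intro c
    ext p q
    rw [Matrix.submatrix_apply, hEntry]
    simp [Matrix.mul_apply, Matrix.conjTranspose_apply, Matrix.transpose_apply]
  have hprod : (∏ σ : (c : Fin C) × Fin (n c),
        (X - Polynomial.C ((Matrix.isHermitian_conjTranspose_mul_self (T * Y σ.1)).eigenvalues σ.2))) =
      ∏ σ : (c : Fin C) × Fin (n c),
        (X - Polynomial.C ((Matrix.isHermitian_conjTranspose_mul_self M).eigenvalues σ)) := by
    rw [← my_charpoly_hermitian (Matrix.isHermitian_conjTranspose_mul_self M),
      my_charpoly_sigma_block (Mᴴ * M) hA]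
    rw [← Finset.univ_sigma_univ, Finset.prod_sigma]
    refine Finset.prod_congr rfl fun c _ => ?_
    rw [← my_charpoly_hermitian (Matrix.isHermitian_conjTranspose_mul_self (T * Y c)), hsub]
  calc (∑ c, nuclearNorm (T * Y c))
      = ∑ σ : (c : Fin C) × Fin (n c),
          Real.sqrt ((Matrix.isHermitian_conjTranspose_mul_self (T * Y σ.1)).eigenvalues σ.2) := by
        rw [← Finset.univ_sigma_univ, Finset.sum_sigma]
        rfl
    _ = ∑ σ : (c : Fin C) × Fin (n c),
          Real.sqrt ((Matrix.isHermitian_conjTranspose_mul_self M).eigenvalues σ) :=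
        my_sum_eq_of_prod_X_sub_C _ _ Real.sqrt hprod
    _ = nuclearNorm M := rfl
end
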